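/- arXiv:1801.05653 — 4 statements merged into one kernel-verified Lean document; each statement's English description precedes it below -/
import Mathlib

section
/- Let Ω ⊆ ℝ^d be a nonempty bounded open set, μ > 0, and let K : closure(Ω) × closure(Ω) → ℝ be continuous and satisfy ∫_Ω K(x,y) dy = 1 for every x ∈ Ω. Let u : (0,∞) × closure(Ω) → ℝ be continuous with u(t,x) > 0 for all t, x, with continuous time derivative ∂_t u on (0,∞) × closure(Ω), twice continuously differentiable in x on Ω, satisfying ∂_t u(t,x) = μ (1 − ∫_Ω K(x,y) u(t,y) dy) u(t,x) + Δu(t,x) for all t > 0, x ∈ Ω, and satisfying for every t > 0 the integration-by-parts identity ∫_Ω Δ_x u(t,x)(1 − 1/u(t,x)) dx = −∫_Ω ‖∇_x u(t,x)‖²/u(t,x)² dx. Then the function g(t) := ∫_Ω (u(t,x) − 1 − log u(t,x)) dx is differentiable on (0,∞) with derivative g'(t) = −∫_Ω ‖∇_x u(t,x)‖²/u(t,x)² dx − μ ∬_{Ω×Ω} K(x,y)(1 − u(t,x))(1 − u(t,y)) dx dy. -/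
open MeasureTheory Filter

private lemma tietze_on {X : Type*} [TopologicalSpace X] [NormalSpace X] {s : Set X}
    (hs : IsClosed s) (f : X → ℝ) (hf : ContinuousOn f s) :
    ∃ g : X → ℝ, Continuous g ∧ ∀ x ∈ s, g x = f x := by
  obtain ⟨g, hg⟩ := ContinuousMap.exists_restrict_eq hs
    ⟨s.restrict f, continuousOn_iff_continuous_restrict.mp hf⟩
  exact ⟨g, g.continuous, fun x hx => congrFun (congrArg DFunLike.coe hg) ⟨x, hx⟩⟩

/-- The Laplacian of a real-valued function on `EuclideanSpace ℝ (Fin d)`,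
as the sum of the second partial derivatives in the coordinate directions. -/
noncomputable def laplacian {d : ℕ} (u : EuclideanSpace ℝ (Fin d) → ℝ)
    (x : EuclideanSpace ℝ (Fin d)) : ℝ :=
  ∑ i : Fin d,
    fderiv ℝ (fun y => fderiv ℝ u y (EuclideanSpace.single i 1)) x (EuclideanSpace.single i 1)

/-- The dissipation identity for the Lyapunov functional
`V(u) = ∫_Ω (u - 1 - log u)` along solutions of the non-local Fisher-KPP equation. -/
theorem lyapunov_dissipation_identity
    {d : ℕ} (Ω : Set (EuclideanSpace ℝ (Fin d)))
    (hΩopen : IsOpen Ω) (hΩbdd : Bornology.IsBounded Ω) (hΩne : Ω.Nonempty)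
    (μ : ℝ) (hμ : 0 < μ)
    (K : EuclideanSpace ℝ (Fin d) → EuclideanSpace ℝ (Fin d) → ℝ)
    (hKcont : ContinuousOn (fun p : EuclideanSpace ℝ (Fin d) × EuclideanSpace ℝ (Fin d) =>
      K p.1 p.2) (closure Ω ×ˢ closure Ω))
    (hKnorm : ∀ x ∈ Ω, ∫ y in Ω, K x y = 1)
    (u ut : ℝ → EuclideanSpace ℝ (Fin d) → ℝ)
    (hu_cont : ContinuousOn (fun p : ℝ × EuclideanSpace ℝ (Fin d) => u p.1 p.2)
      (Set.Ioi 0 ×ˢ closure Ω))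
    (hu_pos : ∀ t > (0 : ℝ), ∀ x ∈ closure Ω, 0 < u t x)
    (hut : ∀ t > (0 : ℝ), ∀ x ∈ closure Ω, HasDerivAt (fun s => u s x) (ut t x) t)
    (hut_cont : ContinuousOn (fun p : ℝ × EuclideanSpace ℝ (Fin d) => ut p.1 p.2)
      (Set.Ioi 0 ×ˢ closure Ω))
    (hu_smooth : ∀ t > (0 : ℝ), ContDiffOn ℝ 2 (u t) Ω)
    (hPDE : ∀ t > (0 : ℝ), ∀ x ∈ Ω,
      ut t x = μ * (1 - ∫ y in Ω, K x y * u t y) * u t x + laplacian (u t) x)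
    (hNeumann : ∀ t > (0 : ℝ),
      ∫ x in Ω, laplacian (u t) x * (1 - 1 / u t x)
        = -∫ x in Ω, ‖gradient (u t) x‖ ^ 2 / (u t x) ^ 2) :
    ∀ t > (0 : ℝ),
      HasDerivAt (fun s => ∫ x in Ω, (u s x - 1 - Real.log (u s x)))
        (-(∫ x in Ω, ‖gradient (u t) x‖ ^ 2 / (u t x) ^ 2)
          - μ * ∫ x in Ω, ∫ y in Ω, K x y * (1 - u t x) * (1 - u t y)) t := by
  intro t ht
  have hΩm : MeasurableSet Ω := hΩopen.measurableSet
  have hvol : volume Ω < ⊤ := hΩbdd.measure_lt_top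
  have hcΩ : IsCompact (closure Ω) := hΩbdd.isCompact_closure
  -- continuity of time slices
  have hslice : ∀ s > (0 : ℝ), ContinuousOn (u s) (closure Ω) := fun s hs =>
    hu_cont.comp (Continuous.continuousOn (by fun_prop))
      (fun x hx => Set.mk_mem_prod (Set.mem_Ioi.mpr hs) hx)
  have hslice_t : ContinuousOn (u t) (closure Ω) := hslice t ht
  have huts : ContinuousOn (ut t) (closure Ω) :=
    hut_cont.comp (Continuous.continuousOn (by fun_prop))
      (fun x hx => Set.mk_mem_prod (Set.mem_Ioi.mpr ht) hx)
  -- a compact space-time cylinder around time t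
  set I : Set ℝ := Set.Icc (t / 2) (t + t / 2) with hIdef
  have hIpos : ∀ s ∈ I, (0 : ℝ) < s := fun s hs => lt_of_lt_of_le (by linarith) hs.1
  have hball : ∀ s ∈ Metric.ball t (t / 2), s ∈ I := by
    intro s hs
    rw [Metric.mem_ball, Real.dist_eq, abs_sub_lt_iff] at hs
    exact ⟨by linarith [hs.1, hs.2], by linarith [hs.1, hs.2]⟩
  have hScomp : IsCompact (I ×ˢ closure Ω) := isCompact_Icc.prod hcΩ
  have hSsub : I ×ˢ closure Ω ⊆ Set.Ioi 0 ×ˢ closure Ω := fun p hp =>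
    ⟨Set.mem_Ioi.mpr (hIpos _ hp.1), hp.2⟩
  obtain ⟨x₀, hx₀⟩ := hΩne
  have hSne : (I ×ˢ closure Ω).Nonempty :=
    ⟨(t, x₀), Set.mk_mem_prod ⟨by linarith, by linarith⟩ (subset_closure hx₀)⟩
  -- a positive lower bound for u on the cylinder
  obtain ⟨p, hpS, hpmin⟩ := hScomp.exists_isMinOn hSne (hu_cont.mono hSsub)
  set m := u p.1 p.2 with hmdef
  have hm : 0 < m := hu_pos p.1 (hIpos _ hpS.1) p.2 hpS.2
  have hmle : ∀ s ∈ I, ∀ x ∈ closure Ω, m ≤ u s x := fun s hs x hx =>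
    hpmin (Set.mk_mem_prod hs hx)
  -- a bound for ut on the cylinder
  obtain ⟨M, hM⟩ := hScomp.exists_bound_of_continuousOn (hut_cont.mono hSsub)
  have hM0 : 0 ≤ M := le_trans (norm_nonneg (ut t x₀)) (hM (t, x₀)
    (Set.mk_mem_prod ⟨by linarith, by linarith⟩ (subset_closure hx₀)))
  -- differentiation under the integral sign
  have key := hasDerivAt_integral_of_dominated_loc_of_deriv_le
      (μ := volume.restrict Ω) (x₀ := t)
      (F := fun s x => u s x - 1 - Real.log (u s x))
      (F' := fun s x => ut s x - ut s x / u s x)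
      (bound := fun _ => M + M / m) (Metric.ball_mem_nhds t (half_pos ht))
      (by -- hF_meas
        filter_upwards [Ioi_mem_nhds ht] with s hs
        have hc : ContinuousOn (fun x => u s x - 1 - Real.log (u s x)) Ω :=
          (((hslice s hs).sub continuousOn_const).sub
            ((hslice s hs).log fun x hx => (hu_pos s hs x hx).ne')).mono subset_closure
        exact hc.aestronglyMeasurable hΩm)
      (by -- hF_int
        have hc : ContinuousOn (fun x => u t x - 1 - Real.log (u t x)) (closure Ω) :=
          (hslice_t.sub continuousOn_const).sub
            (hslice_t.log fun x hx => (hu_pos t ht x hx).ne')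
        exact (hc.integrableOn_compact hcΩ).mono_set subset_closure)
      (by -- hF'_meas
        have hc : ContinuousOn (fun x => ut t x - ut t x / u t x) Ω :=
          (huts.sub (huts.div hslice_t fun x hx => (hu_pos t ht x hx).ne')).mono subset_closure
        exact hc.aestronglyMeasurable hΩm)
      (by -- h_bound
        rw [ae_restrict_iff' hΩm]
        refine Eventually.of_forall fun x hx s hs => ?_
        have hsI : s ∈ I := hball s hs
        have hxc : x ∈ closure Ω := subset_closure hx
        have h1 : |ut s x| ≤ M := hM (s, x) (Set.mk_mem_prod hsI hxc)
        have h2 : m ≤ u s x := hmle s hsI x hxc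
        have h3 : |ut s x / u s x| ≤ M / m := by
          rw [abs_div, abs_of_pos (lt_of_lt_of_le hm h2)]
          exact div_le_div₀ hM0 h1 hm h2
        calc ‖ut s x - ut s x / u s x‖ ≤ |ut s x| + |ut s x / u s x| := abs_sub _ _
          _ ≤ M + M / m := add_le_add h1 h3)
      (integrableOn_const hvol.ne) -- bound_integrable
      (by -- h_diff
        rw [ae_restrict_iff' hΩm]
        refine Eventually.of_forall fun x hx s hs => ?_
        have hsI : s ∈ I := hball s hs
        have hs0 : (0 : ℝ) < s := hIpos s hsI
        have hxc : x ∈ closure Ω := subset_closure hx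
        have hd := hut s hs0 x hxc
        exact (hd.sub_const 1).sub (hd.log (hu_pos s hs0 x hxc).ne'))
  -- identify the value of the derivative
  set G : EuclideanSpace ℝ (Fin d) → ℝ := fun x => ∫ y in Ω, K x y * u t y with hGdef
  set A : EuclideanSpace ℝ (Fin d) → ℝ := fun x => μ * (1 - G x) * (u t x - 1) with hAdef
  set B : EuclideanSpace ℝ (Fin d) → ℝ := fun x => laplacian (u t) x * (1 - 1 / u t x)
    with hBdef
  -- the pointwise identity coming from the PDE
  have hsplit : ∀ x ∈ Ω, ut t x - ut t x / u t x = A x + B x := by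
    intro x hx
    have hx0 : u t x ≠ 0 := (hu_pos t ht x (subset_closure hx)).ne'
    have h1 : u t x * (1 - 1 / u t x) = u t x - 1 := by field_simp
    calc ut t x - ut t x / u t x = ut t x * (1 - 1 / u t x) := by ring
      _ = (μ * (1 - G x) * u t x + laplacian (u t) x) * (1 - 1 / u t x) := by
          rw [← hPDE t ht x hx]
      _ = μ * (1 - G x) * (u t x * (1 - 1 / u t x)) + B x := by rw [hBdef]; ring
      _ = A x + B x := by rw [h1]
  -- integrability of A, via Tietze extension and joint measurability
  obtain ⟨K', hK'c, hK'eq⟩ := tietze_on (isClosed_closure.prod isClosed_closure) _ hKcont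
  obtain ⟨v, hvc, hveq⟩ := tietze_on isClosed_closure (u t) hslice_t
  have hG'm : StronglyMeasurable fun x => ∫ y, K' (x, y) * v y ∂(volume.restrict Ω) := by
    have : Continuous fun p : EuclideanSpace ℝ (Fin d) × EuclideanSpace ℝ (Fin d) =>
        K' p * v p.2 := by fun_prop
    exact StronglyMeasurable.integral_prod_right'
      (f := fun p : EuclideanSpace ℝ (Fin d) × EuclideanSpace ℝ (Fin d) => K' p * v p.2)
      this.stronglyMeasurable
  have hGG' : ∀ x ∈ Ω, G x = ∫ y, K' (x, y) * v y ∂(volume.restrict Ω) := by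
    intro x hx
    refine setIntegral_congr_fun hΩm fun y hy => ?_
    rw [hK'eq (x, y) (Set.mk_mem_prod (subset_closure hx) (subset_closure hy)),
      hveq y (subset_closure hy)]
  obtain ⟨MK, hMK⟩ := (hcΩ.prod hcΩ).exists_bound_of_continuousOn hKcont
  obtain ⟨Mu, hMu⟩ := hcΩ.exists_bound_of_continuousOn hslice_t
  have hGbd : ∀ x ∈ Ω, |G x| ≤ MK * Mu * (volume Ω).toReal := by
    intro x hx
    have hxc : x ∈ closure Ω := subset_closure hx
    have hMK0 : 0 ≤ MK := le_trans (norm_nonneg _)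
      (hMK (x, x) (Set.mk_mem_prod hxc hxc))
    show ‖∫ y in Ω, K x y * u t y‖ ≤ MK * Mu * (volume Ω).toReal
    refine norm_setIntegral_le_of_norm_le_const hvol fun y hy => ?_
    have hyc : y ∈ closure Ω := subset_closure hy
    calc ‖K x y * u t y‖ = ‖K x y‖ * ‖u t y‖ := norm_mul _ _
      _ ≤ MK * Mu := mul_le_mul (hMK (x, y) (Set.mk_mem_prod hxc hyc)) (hMu y hyc)
          (norm_nonneg _) hMK0
  have hAmeas : AEStronglyMeasurable A (volume.restrict Ω) := by
    have hsm : StronglyMeasurable fun x =>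
        μ * (1 - ∫ y, K' (x, y) * v y ∂(volume.restrict Ω)) * (v x - 1) :=
      ((stronglyMeasurable_const.sub hG'm).const_mul μ).mul
        (hvc.stronglyMeasurable.sub stronglyMeasurable_const)
    refine hsm.aestronglyMeasurable.congr ?_
    rw [Filter.EventuallyEq, ae_restrict_iff' hΩm]
    refine Eventually.of_forall fun x hx => ?_
    rw [hAdef]
    simp only
    rw [hGG' x hx, hveq x (subset_closure hx)]
  have hA_int : IntegrableOn A Ω := by
    refine Integrable.mono' (g := fun _ => μ * (1 + MK * Mu * (volume Ω).toReal) * (Mu + 1))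
      (integrableOn_const hvol.ne) hAmeas ?_
    rw [ae_restrict_iff' hΩm]
    refine Eventually.of_forall fun x hx => ?_
    have h1 : |1 - G x| ≤ 1 + MK * Mu * (volume Ω).toReal := by
      calc |1 - G x| ≤ |(1 : ℝ)| + |G x| := abs_sub _ _
        _ ≤ 1 + MK * Mu * (volume Ω).toReal := by
            rw [abs_one]; exact add_le_add_right (hGbd x hx) 1
    have h2 : |u t x - 1| ≤ Mu + 1 := by
      calc |u t x - 1| ≤ |u t x| + |(1 : ℝ)| := abs_sub _ _
        _ ≤ Mu + 1 := by rw [abs_one]; exact add_le_add_left (hMu x (subset_closure hx)) 1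
    calc ‖A x‖ = μ * |1 - G x| * |u t x - 1| := by
          rw [hAdef]; simp only [Real.norm_eq_abs, abs_mul, abs_of_pos hμ]
      _ ≤ μ * (1 + MK * Mu * (volume Ω).toReal) * (Mu + 1) := by
          exact mul_le_mul (mul_le_mul_of_nonneg_left h1 hμ.le) h2 (abs_nonneg _)
            (mul_nonneg hμ.le ((abs_nonneg _).trans h1))
  -- integrability of f = ut (1 - 1/u) and hence of B
  have hf_int : IntegrableOn (fun x => ut t x - ut t x / u t x) Ω := by
    have hc : ContinuousOn (fun x => ut t x - ut t x / u t x) (closure Ω) :=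
      huts.sub (huts.div hslice_t fun x hx => (hu_pos t ht x hx).ne')
    exact (hc.integrableOn_compact hcΩ).mono_set subset_closure
  have hB_int : IntegrableOn B Ω := by
    refine (hf_int.sub hA_int).congr ?_
    rw [Filter.EventuallyEq, ae_restrict_iff' hΩm]
    exact Eventually.of_forall fun x hx => by
      simp only [Pi.sub_apply]; rw [hsplit x hx]; ring
  -- the value of ∫ A
  have hAval : ∀ x ∈ Ω, A x = μ * -(∫ y in Ω, K x y * (1 - u t x) * (1 - u t y)) := by
    intro x hx
    have hxc : x ∈ closure Ω := subset_closure hx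
    have hKx_cont : ContinuousOn (fun y => K x y) (closure Ω) :=
      hKcont.comp (Continuous.continuousOn (by fun_prop)) (fun y hy => Set.mk_mem_prod hxc hy)
    have hKx_int : IntegrableOn (fun y => K x y) Ω :=
      (hKx_cont.integrableOn_compact hcΩ).mono_set subset_closure
    have hKu_int : IntegrableOn (fun y => K x y * u t y) Ω :=
      ((hKx_cont.mul hslice_t).integrableOn_compact hcΩ).mono_set subset_closure
    have h1 : ∫ y in Ω, K x y * (1 - u t y) = 1 - G x := by
      have : (∫ y in Ω, K x y * (1 - u t y)) = ∫ y in Ω, (K x y - K x y * u t y) :=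
        setIntegral_congr_fun hΩm fun y _ => by ring
      rw [this, integral_sub hKx_int hKu_int, hKnorm x hx, hGdef]
    have h2 : ∫ y in Ω, K x y * (1 - u t x) * (1 - u t y)
        = (1 - u t x) * ∫ y in Ω, K x y * (1 - u t y) := by
      rw [← integral_const_mul]
      exact setIntegral_congr_fun hΩm fun y _ => by ring
    rw [hAdef]
    simp only
    rw [h2, h1]
    ring
  -- assemble the value of the derivative
  have hval : (∫ x in Ω, (ut t x - ut t x / u t x))
      = -(∫ x in Ω, ‖gradient (u t) x‖ ^ 2 / (u t x) ^ 2)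
        - μ * ∫ x in Ω, ∫ y in Ω, K x y * (1 - u t x) * (1 - u t y) := by
    rw [setIntegral_congr_fun hΩm fun x hx => hsplit x hx,
      integral_add hA_int hB_int,
      setIntegral_congr_fun hΩm fun x hx => hAval x hx]
    rw [integral_const_mul, integral_neg]
    rw [show (∫ x in Ω, B x) = -∫ x in Ω, ‖gradient (u t) x‖ ^ 2 / (u t x) ^ 2 from
      hNeumann t ht]
    ring
  exact hval ▸ key.2
end

section
/- Let Ω ⊆ ℝ^d be a nonempty bounded open set, μ > 0, and let K : closure(Ω) × closure(Ω) → ℝ be continuous, satisfy ∫_Ω K(x,y) dy = 1 for every x ∈ Ω, and satisfy the positivity condition ∬_{Ω×Ω} K(x,y) f(x) f(y) dx dy ≥ 0 for every f ∈ L²(Ω). Let u : (0,∞) × closure(Ω) → ℝ be continuous, positive, with continuous time derivative ∂_t u on (0,∞) × closure(Ω), twice continuously differentiable in x on Ω, satisfying ∂_t u = μ (1 − ∫_Ω K(x,y) u(t,y) dy) u + Δu on (0,∞) × Ω, and satisfying for every t > 0 the identity ∫_Ω Δ_x u(t,x)(1 − 1/u(t,x)) dx = −∫_Ω ‖∇_x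 u(t,x)‖²/u(t,x)² dx. Then t ↦ ∫_Ω (u(t,x) − 1 − log u(t,x)) dx is non-increasing on (0,∞). -/
open MeasureTheory Filter

/-- `t ↦ ∫_Ω (u(t) - 1 - log u(t))` is a Lyapunov functional (non-increasing in time)
for the non-local Fisher-KPP equation with a positive kernel. -/
theorem lyapunov_antitone
    {d : ℕ} (Ω : Set (EuclideanSpace ℝ (Fin d)))
    (hΩopen : IsOpen Ω) (hΩbdd : Bornology.IsBounded Ω) (hΩne : Ω.Nonempty)
    (μ : ℝ) (hμ : 0 < μ)
    (K : EuclideanSpace ℝ (Fin d) → EuclideanSpace ℝ (Fin d) → ℝ)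
    (hKcont : ContinuousOn (fun p : EuclideanSpace ℝ (Fin d) × EuclideanSpace ℝ (Fin d) =>
      K p.1 p.2) (closure Ω ×ˢ closure Ω))
    (hKnorm : ∀ x ∈ Ω, ∫ y in Ω, K x y = 1)
    (hKposdef : ∀ f : EuclideanSpace ℝ (Fin d) → ℝ, MemLp f 2 (volume.restrict Ω) →
      0 ≤ ∫ x in Ω, ∫ y in Ω, K x y * f x * f y)
    (u ut : ℝ → EuclideanSpace ℝ (Fin d) → ℝ)
    (hu_cont : ContinuousOn (fun p : ℝ × EuclideanSpace ℝ (Fin d) => u p.1 p.2)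
      (Set.Ioi 0 ×ˢ closure Ω))
    (hu_pos : ∀ t > (0 : ℝ), ∀ x ∈ closure Ω, 0 < u t x)
    (hut : ∀ t > (0 : ℝ), ∀ x ∈ closure Ω, HasDerivAt (fun s => u s x) (ut t x) t)
    (hut_cont : ContinuousOn (fun p : ℝ × EuclideanSpace ℝ (Fin d) => ut p.1 p.2)
      (Set.Ioi 0 ×ˢ closure Ω))
    (hu_smooth : ∀ t > (0 : ℝ), ContDiffOn ℝ 2 (u t) Ω)
    (hPDE : ∀ t > (0 : ℝ), ∀ x ∈ Ω,
      ut t x = μ * (1 - ∫ y in Ω, K x y * u t y) * u t x + laplacian (u t) x)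
    (hNeumann : ∀ t > (0 : ℝ),
      ∫ x in Ω, laplacian (u t) x * (1 - 1 / u t x)
        = -∫ x in Ω, ‖gradient (u t) x‖ ^ 2 / (u t x) ^ 2) :
    AntitoneOn (fun t => ∫ x in Ω, (u t x - 1 - Real.log (u t x))) (Set.Ioi 0) := by
  -- basic facts
  have hΩmeas : MeasurableSet Ω := hΩopen.measurableSet
  have hclcomp : IsCompact (closure Ω) := hΩbdd.isCompact_closure
  have hsub : Ω ⊆ closure Ω := subset_closure
  have hvol : volume Ω < ⊤ := hΩbdd.measure_lt_top
  haveI hfin : IsFiniteMeasure (volume.restrict Ω) :=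
    ⟨by rwa [Measure.restrict_apply_univ]⟩
  -- continuity of time slices
  have hu_slice : ∀ t > (0 : ℝ), ContinuousOn (u t) (closure Ω) := by
    intro t ht
    exact hu_cont.comp ((Continuous.prodMk_right t).continuousOn) fun x hx => ⟨ht, hx⟩
  have hut_slice : ∀ t > (0 : ℝ), ContinuousOn (ut t) (closure Ω) := by
    intro t ht
    exact hut_cont.comp ((Continuous.prodMk_right t).continuousOn) fun x hx => ⟨ht, hx⟩
  -- the candidate derivative
  set G : ℝ → ℝ := fun t => ∫ x in Ω, (ut t x - ut t x / u t x) with hGdef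
  -- Step A: G t ≤ 0 for t > 0
  have hGle : ∀ t ∈ Set.Ioi (0:ℝ), G t ≤ 0 := by
    intro t ht
    have ht0 : (0:ℝ) < t := ht
    have hupos : ∀ x ∈ Ω, 0 < u t x := fun x hx => hu_pos t ht0 x (hsub hx)
    set f : EuclideanSpace ℝ (Fin d) → ℝ := fun x => u t x - 1 with hfdef
    have hfc : ContinuousOn f (closure Ω) := (hu_slice t ht0).sub continuousOn_const
    obtain ⟨Cu, hCu⟩ := hclcomp.exists_bound_of_continuousOn (hu_slice t ht0)
    obtain ⟨CK, hCK⟩ := (hclcomp.prod hclcomp).exists_bound_of_continuousOn hKcont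
    have hCu0 : 0 ≤ Cu := le_trans (norm_nonneg _) (hCu _ (hsub hΩne.some_mem))
    have hCK0 : 0 ≤ CK := le_trans (norm_nonneg _)
      (hCK (hΩne.some, hΩne.some) ⟨hsub hΩne.some_mem, hsub hΩne.some_mem⟩)
    -- inner integral I x
    set I : EuclideanSpace ℝ (Fin d) → ℝ := fun x => ∫ y in Ω, K x y * u t y with hIdef
    have hKxc : ∀ x ∈ closure Ω, ContinuousOn (fun y => K x y) (closure Ω) := by
      intro x hx
      exact hKcont.comp ((Continuous.prodMk_right x).continuousOn) fun y hy => ⟨hx, hy⟩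
    have hKint : ∀ x ∈ closure Ω, IntegrableOn (fun y => K x y) Ω := fun x hx =>
      (((hKxc x hx).integrableOn_compact hclcomp)).mono_set hsub
    have hKuint : ∀ x ∈ closure Ω, IntegrableOn (fun y => K x y * u t y) Ω := fun x hx =>
      ((((hKxc x hx).mul ((hu_slice t ht0))).integrableOn_compact hclcomp)).mono_set hsub
    -- bound on I
    set CI : ℝ := CK * Cu * (volume Ω).toReal with hCIdef
    have hCI0 : 0 ≤ CI := by positivity
    have hIbnd : ∀ x ∈ Ω, |I x| ≤ CI := by
      intro x hx
      rw [← Real.norm_eq_abs]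
      refine norm_setIntegral_le_of_norm_le_const hvol (fun y hy => ?_)
      calc ‖K x y * u t y‖ = ‖K x y‖ * ‖u t y‖ := norm_mul _ _
        _ ≤ CK * Cu := by
            gcongr
            · exact hCK (x, y) ⟨hsub hx, hsub hy⟩
            · exact hCu y (hsub hy)
    -- measurability of I
    have hImeas : AEStronglyMeasurable I (volume.restrict Ω) := by
      have hjc : ContinuousOn (fun p : EuclideanSpace ℝ (Fin d) × EuclideanSpace ℝ (Fin d) =>
          K p.1 p.2 * u t p.2) (closure Ω ×ˢ closure Ω) :=
        hKcont.mul ((hu_slice t ht0).comp continuous_snd.continuousOn fun p hp => hp.2)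
      have hjm : AEStronglyMeasurable
          (fun p : EuclideanSpace ℝ (Fin d) × EuclideanSpace ℝ (Fin d) => K p.1 p.2 * u t p.2)
          ((volume.restrict Ω).prod (volume.restrict Ω)) := by
        rw [Measure.prod_restrict]
        exact (hjc.mono (Set.prod_mono hsub hsub)).aestronglyMeasurable (hΩmeas.prod hΩmeas)
      exact hjm.integral_prod_right'
    -- pointwise PDE decomposition
    have hg_eq : ∀ x ∈ Ω, ut t x - ut t x / u t x
        = μ * (1 - I x) * f x + laplacian (u t) x * (1 - 1 / u t x) := by
      intro x hx
      have hu0 : u t x ≠ 0 := (hupos x hx).ne'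
      rw [hPDE t ht0 x hx]
      field_simp
      ring
    -- integrability
    have hg_int : IntegrableOn (fun x => ut t x - ut t x / u t x) Ω := by
      have hc : ContinuousOn (fun x => ut t x - ut t x / u t x) (closure Ω) :=
        (hut_slice t ht0).sub ((hut_slice t ht0).div (hu_slice t ht0)
          fun x hx => (hu_pos t ht0 x hx).ne')
      exact (hc.integrableOn_compact hclcomp).mono_set hsub
    have hA_int : IntegrableOn (fun x => μ * (1 - I x) * f x) Ω := by
      have hmeas : AEStronglyMeasurable (fun x => μ * (1 - I x) * f x) (volume.restrict Ω) := by
        exact ((aestronglyMeasurable_const.mul (aestronglyMeasurable_const.sub hImeas)).mul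
          ((hfc.mono hsub).aestronglyMeasurable hΩmeas))
      refine Integrable.mono' (integrable_const (μ * (1 + CI) * (Cu + 1))) hmeas ?_
      refine (ae_restrict_iff' hΩmeas).2 (Eventually.of_forall fun x hx => ?_)
      have h1 := abs_le.1 (hIbnd x hx)
      have h2 : |u t x| ≤ Cu := by rw [← Real.norm_eq_abs]; exact hCu x (hsub hx)
      have h2' := abs_le.1 h2
      have e1 : |1 - I x| ≤ 1 + CI := abs_le.2 ⟨by linarith, by linarith⟩
      have e2 : |f x| ≤ Cu + 1 := by
        rw [hfdef]; exact abs_le.2 ⟨by dsimp; linarith, by dsimp; linarith⟩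
      rw [Real.norm_eq_abs, abs_mul, abs_mul, abs_of_pos hμ]
      gcongr
    have hB_int : IntegrableOn (fun x => laplacian (u t) x * (1 - 1 / u t x)) Ω := by
      refine (hg_int.sub hA_int).congr ?_
      refine (ae_restrict_iff' hΩmeas).2 (Eventually.of_forall fun x hx => ?_)
      have := hg_eq x hx
      simp only [Pi.sub_apply]
      linarith
    -- split the integral
    have hsplit : G t = (∫ x in Ω, μ * (1 - I x) * f x)
        + ∫ x in Ω, laplacian (u t) x * (1 - 1 / u t x) := by
      rw [hGdef, ← integral_add hA_int hB_int]
      exact setIntegral_congr_fun hΩmeas fun x hx => hg_eq x hx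
    -- second term nonpositive
    have hBle : (∫ x in Ω, laplacian (u t) x * (1 - 1 / u t x)) ≤ 0 := by
      rw [hNeumann t ht0]
      refine neg_nonpos.2 (integral_nonneg fun x => ?_)
      positivity
    -- first term nonpositive
    have hfL2 : MemLp f 2 (volume.restrict Ω) := by
      refine MemLp.of_bound ((hfc.mono hsub).aestronglyMeasurable hΩmeas) (Cu + 1) ?_
      refine (ae_restrict_iff' hΩmeas).2 (Eventually.of_forall fun x hx => ?_)
      have h2 : |u t x| ≤ Cu := by rw [← Real.norm_eq_abs]; exact hCu x (hsub hx)
      have h2' := abs_le.1 h2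
      rw [Real.norm_eq_abs, hfdef]
      exact abs_le.2 ⟨by dsimp; linarith, by dsimp; linarith⟩
    have hpos := hKposdef f hfL2
    have hpt : ∀ x ∈ Ω, (1 - I x) * f x = -(∫ y in Ω, K x y * f x * f y) := by
      intro x hx
      have hx' := hsub hx
      have e1 : (∫ y in Ω, K x y * f x * f y)
          = f x * ∫ y in Ω, (K x y * u t y - K x y) := by
        rw [← integral_const_mul]
        refine setIntegral_congr_fun hΩmeas fun y hy => ?_
        rw [hfdef]; dsimp; ring
      rw [e1, integral_sub (hKuint x hx') (hKint x hx'), hKnorm x hx, hIdef]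
      dsimp
      ring
    have hAeq : (∫ x in Ω, μ * (1 - I x) * f x)
        = -(μ * ∫ x in Ω, ∫ y in Ω, K x y * f x * f y) := by
      have e0 : (∫ x in Ω, μ * (1 - I x) * f x) = μ * ∫ x in Ω, (1 - I x) * f x := by
        rw [← integral_const_mul]
        exact setIntegral_congr_fun hΩmeas fun x hx => by ring
      rw [e0]
      have e1 : (∫ x in Ω, (1 - I x) * f x)
          = ∫ x in Ω, -(∫ y in Ω, K x y * f x * f y) :=
        setIntegral_congr_fun hΩmeas fun x hx => hpt x hx
      rw [e1, integral_neg]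
      ring
    have hAle : (∫ x in Ω, μ * (1 - I x) * f x) ≤ 0 := by
      rw [hAeq]
      have : 0 ≤ μ * ∫ x in Ω, ∫ y in Ω, K x y * f x * f y := by positivity
      linarith
    rw [hsplit]
    linarith
  -- Step B: differentiation under the integral sign
  have hderiv : ∀ t₀ ∈ Set.Ioi (0:ℝ),
      HasDerivAt (fun s => ∫ x in Ω, (u s x - 1 - Real.log (u s x))) (G t₀) t₀ := by
    intro t₀ ht₀
    have ht0 : (0:ℝ) < t₀ := ht₀
    set S : Set (ℝ × EuclideanSpace ℝ (Fin d)) := Set.Icc (t₀/2) (t₀ + t₀) ×ˢ closure Ω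
      with hSdef
    have hScomp : IsCompact S := isCompact_Icc.prod hclcomp
    have hSsub : S ⊆ Set.Ioi 0 ×ˢ closure Ω := by
      rintro ⟨s, x⟩ ⟨hs, hx⟩
      exact ⟨lt_of_lt_of_le (by linarith) hs.1, hx⟩
    have hSne : S.Nonempty :=
      ⟨(t₀, hΩne.some), ⟨⟨by linarith, by linarith⟩, hsub hΩne.some_mem⟩⟩
    obtain ⟨p, hpS, hpmin⟩ := hScomp.exists_isMinOn hSne (hu_cont.mono hSsub)
    have hm0 : 0 < u p.1 p.2 := hu_pos p.1 (hSsub hpS).1 p.2 (hSsub hpS).2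
    obtain ⟨M, hM⟩ := hScomp.exists_bound_of_continuousOn (hut_cont.mono hSsub)
    have hM0 : 0 ≤ M := le_trans (norm_nonneg _) (hM p hpS)
    have hball : ∀ s ∈ Metric.ball t₀ (t₀/2), ∀ x ∈ closure Ω, (s, x) ∈ S := by
      intro s hs x hx
      rw [Metric.mem_ball, Real.dist_eq] at hs
      have := abs_lt.1 hs
      exact ⟨⟨by linarith, by linarith⟩, hx⟩
    have hballpos : ∀ s ∈ Metric.ball t₀ (t₀/2), (0:ℝ) < s := by
      intro s hs
      rw [Metric.mem_ball, Real.dist_eq] at hs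
      have := abs_lt.1 hs
      linarith
    have key := hasDerivAt_integral_of_dominated_loc_of_deriv_le
      (F := fun s x => u s x - 1 - Real.log (u s x))
      (F' := fun s x => ut s x - ut s x / u s x)
      (x₀ := t₀) (s := Metric.ball t₀ (t₀/2)) (μ := volume.restrict Ω)
      (bound := fun _ => M + M / u p.1 p.2)
      (Metric.ball_mem_nhds _ (by linarith))
      (by
        filter_upwards [eventually_gt_nhds ht0] with s hs
        have hc : ContinuousOn (fun x => u s x - 1 - Real.log (u s x)) Ω := by
          refine (((hu_slice s hs).mono hsub).sub continuousOn_const).sub ?_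
          exact ((hu_slice s hs).mono hsub).log fun x hx => (hu_pos s hs x (hsub hx)).ne'
        exact hc.aestronglyMeasurable hΩmeas)
      (by
        have hc : ContinuousOn (fun x => u t₀ x - 1 - Real.log (u t₀ x)) (closure Ω) := by
          refine ((hu_slice t₀ ht0).sub continuousOn_const).sub ?_
          exact (hu_slice t₀ ht0).log fun x hx => (hu_pos t₀ ht0 x hx).ne'
        exact (hc.integrableOn_compact hclcomp).mono_set hsub)
      (by
        have hc : ContinuousOn (fun x => ut t₀ x - ut t₀ x / u t₀ x) Ω := by
          refine ((hut_slice t₀ ht0).mono hsub).sub ?_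
          exact ((hut_slice t₀ ht0).mono hsub).div ((hu_slice t₀ ht0).mono hsub)
            fun x hx => (hu_pos t₀ ht0 x (hsub hx)).ne'
        exact hc.aestronglyMeasurable hΩmeas)
      (by
        refine (ae_restrict_iff' hΩmeas).2 (Eventually.of_forall fun x hx => ?_)
        intro s hs
        have hmem : (s, x) ∈ S := hball s hs x (hsub hx)
        have h1 : ‖ut s x‖ ≤ M := hM (s, x) hmem
        have h2 : u p.1 p.2 ≤ u s x := hpmin hmem
        have hu0 : 0 < u s x := lt_of_lt_of_le hm0 h2
        calc ‖ut s x - ut s x / u s x‖ ≤ ‖ut s x‖ + ‖ut s x / u s x‖ := norm_sub_le _ _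
          _ = ‖ut s x‖ + ‖ut s x‖ / u s x := by
              rw [norm_div, Real.norm_of_nonneg hu0.le]
          _ ≤ M + M / u p.1 p.2 := by
              have e3 : ‖ut s x‖ / u s x ≤ M / u p.1 p.2 := div_le_div₀ hM0 h1 hm0 h2
              linarith)
      (integrable_const _)
      (by
        refine (ae_restrict_iff' hΩmeas).2 (Eventually.of_forall fun x hx => ?_)
        intro s hs
        have hs0 : (0:ℝ) < s := hballpos s hs
        have h := hut s hs0 x (hsub hx)
        exact (h.sub_const 1).sub (h.log (hu_pos s hs0 x (hsub hx)).ne'))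
    exact key.2
  -- conclude
  apply antitoneOn_of_deriv_nonpos (convex_Ioi 0)
  · exact fun t htt => (hderiv t htt).continuousAt.continuousWithinAt
  · rw [interior_Ioi]
    exact fun t htt => (hderiv t htt).differentiableAt.differentiableWithinAt
  · rw [interior_Ioi]
    intro t htt
    rw [(hderiv t htt).deriv]
    exact hGle t htt
end

section
/- Let Ω ⊆ ℝ^d be a nonempty bounded open set, μ > 0, and let K : closure(Ω) × closure(Ω) → ℝ be continuous, satisfy ∫_Ω K(x,y) dy = 1 for every x ∈ Ω, and satisfy ∬_{Ω×Ω} K(x,y) f(x) f(y) dx dy ≥ 0 for every f ∈ L²(Ω). Let u : (0,∞) × closure(Ω) → ℝ be continuous, positive, with continuous time derivative, twice continuously differentiable in x on Ω, satisfying ∂_t u = μ (1 − ∫_Ω K(x,y) u(t,y) dy) u + Δu on (0,∞) × Ω and, for every t > 0, ∫_Ω Δ_x u(t,x)(1 − 1/u(t,x)) dx = −∫_Ω ‖∇_x u(t,x)‖²/u(t,x)² dx. Define the dissipation D(t) := ∫_Ω ‖∇_x u(t,x)‖²/u(t,x)² dx + μ ∬_{Ω×Ω} K(x,y)(1 − u(t,x))(1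 − u(t,y)) dx dy. Then for all 0 < t₀ ≤ t₁, ∫_{t₀}^{t₁} D(s) ds ≤ ∫_Ω (u(t₀,x) − 1 − log u(t₀,x)) dx; in particular, the total dissipation ∫_{t₀}^{∞} D(s) ds is finite whenever ∫_Ω (u(t₀,x) − 1 − log u(t₀,x)) dx is finite. -/
open MeasureTheory Filter

/-- Integrated dissipation bound: the time integral of the dissipation `D` on `[t₀, t₁]`
is bounded by the value of the Lyapunov functional at time `t₀`; in particular the total
dissipation on `[t₀, ∞)` is finite whenever the Lyapunov functional at `t₀` is finite.
The possibly-infinite integrals of the nonnegative quantities are taken as `lintegral`s. -/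
theorem integrated_dissipation_bound
    {d : ℕ} (Ω : Set (EuclideanSpace ℝ (Fin d)))
    (hΩopen : IsOpen Ω) (hΩbdd : Bornology.IsBounded Ω) (hΩne : Ω.Nonempty)
    (μ : ℝ) (hμ : 0 < μ)
    (K : EuclideanSpace ℝ (Fin d) → EuclideanSpace ℝ (Fin d) → ℝ)
    (hKcont : ContinuousOn (fun p : EuclideanSpace ℝ (Fin d) × EuclideanSpace ℝ (Fin d) =>
      K p.1 p.2) (closure Ω ×ˢ closure Ω))
    (hKnorm : ∀ x ∈ Ω, ∫ y in Ω, K x y = 1)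
    (hKposdef : ∀ f : EuclideanSpace ℝ (Fin d) → ℝ, MemLp f 2 (volume.restrict Ω) →
      0 ≤ ∫ x in Ω, ∫ y in Ω, K x y * f x * f y)
    (u ut : ℝ → EuclideanSpace ℝ (Fin d) → ℝ)
    (hu_cont : ContinuousOn (fun p : ℝ × EuclideanSpace ℝ (Fin d) => u p.1 p.2)
      (Set.Ioi 0 ×ˢ closure Ω))
    (hu_pos : ∀ t > (0 : ℝ), ∀ x ∈ closure Ω, 0 < u t x)
    (hut : ∀ t > (0 : ℝ), ∀ x ∈ closure Ω, HasDerivAt (fun s => u s x) (ut t x) t)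
    (hut_cont : ContinuousOn (fun p : ℝ × EuclideanSpace ℝ (Fin d) => ut p.1 p.2)
      (Set.Ioi 0 ×ˢ closure Ω))
    (hu_smooth : ∀ t > (0 : ℝ), ContDiffOn ℝ 2 (u t) Ω)
    (hPDE : ∀ t > (0 : ℝ), ∀ x ∈ Ω,
      ut t x = μ * (1 - ∫ y in Ω, K x y * u t y) * u t x + laplacian (u t) x)
    (hNeumann : ∀ t > (0 : ℝ),
      ∫ x in Ω, laplacian (u t) x * (1 - 1 / u t x)
        = -∫ x in Ω, ‖gradient (u t) x‖ ^ 2 / (u t x) ^ 2)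
    (D : ℝ → ℝ)
    (hD : ∀ t, D t = (∫ x in Ω, ‖gradient (u t) x‖ ^ 2 / (u t x) ^ 2)
      + μ * ∫ x in Ω, ∫ y in Ω, K x y * (1 - u t x) * (1 - u t y)) :
    ∀ t₀ t₁ : ℝ, 0 < t₀ → t₀ ≤ t₁ →
      (∫⁻ s in Set.Ioc t₀ t₁, ENNReal.ofReal (D s)
          ≤ ∫⁻ x in Ω, ENNReal.ofReal (u t₀ x - 1 - Real.log (u t₀ x)))
      ∧ ((∫⁻ x in Ω, ENNReal.ofReal (u t₀ x - 1 - Real.log (u t₀ x))) < ⊤ →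
          (∫⁻ s in Set.Ici t₀, ENNReal.ofReal (D s)) < ⊤) := by
  classical
  intro t₀ t₁ ht₀ ht₀₁
  have hCcp : IsCompact (closure Ω) := hΩbdd.isCompact_closure
  have hΩmeas : MeasurableSet Ω := hΩopen.measurableSet
  have hsub : Ω ⊆ closure Ω := subset_closure
  have hΩfin : volume Ω < ⊤ := hΩbdd.measure_lt_top
  haveI hfinR : IsFiniteMeasure (volume.restrict Ω) :=
    ⟨by rw [Measure.restrict_apply_univ]; exact hΩfin⟩
  -- continuity of slices
  have hu_sliceX : ∀ t ∈ Set.Ioi (0:ℝ), ContinuousOn (u t) (closure Ω) := fun t ht =>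
    hu_cont.comp (continuous_const.prodMk continuous_id).continuousOn
      (fun x hx => Set.mk_mem_prod ht hx)
  have hut_sliceX : ∀ t ∈ Set.Ioi (0:ℝ), ContinuousOn (ut t) (closure Ω) := fun t ht =>
    hut_cont.comp (continuous_const.prodMk continuous_id).continuousOn
      (fun x hx => Set.mk_mem_prod ht hx)
  have hu_ne : ∀ t ∈ Set.Ioi (0:ℝ), ∀ x ∈ closure Ω, u t x ≠ 0 := fun t ht x hx =>
    (hu_pos t ht x hx).ne'
  -- integrability / measurability helpers
  have hIntC : ∀ f : EuclideanSpace ℝ (Fin d) → ℝ, ContinuousOn f (closure Ω) →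
      IntegrableOn f Ω volume := fun f hf =>
    (hf.integrableOn_compact hCcp).mono_set hsub
  have hMeas : ∀ f : EuclideanSpace ℝ (Fin d) → ℝ, ContinuousOn f (closure Ω) →
      AEStronglyMeasurable f (volume.restrict Ω) := fun f hf =>
    (hf.mono hsub).aestronglyMeasurable hΩmeas
  -- the dissipation integrand in time
  set g : ℝ → EuclideanSpace ℝ (Fin d) → ℝ := fun t x => ut t x * (1 - 1 / u t x) with hg
  have hgcont : ContinuousOn (fun p : ℝ × EuclideanSpace ℝ (Fin d) => g p.1 p.2)
      (Set.Ioi 0 ×ˢ closure Ω) := by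
    refine hut_cont.mul (continuousOn_const.sub (continuousOn_const.div hu_cont ?_))
    exact fun p hp => hu_ne p.1 hp.1 p.2 hp.2
  have hg_sliceX : ∀ t ∈ Set.Ioi (0:ℝ), ContinuousOn (g t) (closure Ω) := fun t ht =>
    hgcont.comp (continuous_const.prodMk continuous_id).continuousOn
      (fun x hx => Set.mk_mem_prod ht hx)
  -- uniform bounds on compact time slabs
  have hbdd : ∀ a b : ℝ, 0 < a → ∃ M : ℝ, ∀ s ∈ Set.Icc a b, ∀ x ∈ closure Ω,
      ‖g s x‖ ≤ M := by
    intro a b ha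
    obtain ⟨M, hM⟩ := (isCompact_Icc.prod hCcp).exists_bound_of_continuousOn
      (hgcont.mono fun p hp => ⟨lt_of_lt_of_le ha hp.1.1, hp.2⟩)
    exact ⟨M, fun s hs x hx => hM (s, x) ⟨hs, hx⟩⟩
  have hball : ∀ t : ℝ, 0 < t → Metric.ball t (t/2) ⊆ Set.Icc (t/2) (2*t) := by
    intro t ht s hs
    rw [Metric.mem_ball, Real.dist_eq, abs_lt] at hs
    constructor <;> linarith [hs.1, hs.2]
  -- Step 1: differentiation under the integral sign
  have key1 : ∀ t, 0 < t → HasDerivAt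
      (fun s => ∫ x in Ω, (u s x - 1 - Real.log (u s x))) (∫ x in Ω, g t x) t := by
    intro t ht
    obtain ⟨M, hM⟩ := hbdd (t/2) (2*t) (by positivity)
    have hFc : ∀ s ∈ Set.Ioi (0:ℝ),
        ContinuousOn (fun x => u s x - 1 - Real.log (u s x)) (closure Ω) := fun s hs =>
      ((hu_sliceX s hs).sub continuousOn_const).sub ((hu_sliceX s hs).log (hu_ne s hs))
    have := hasDerivAt_integral_of_dominated_loc_of_deriv_le (μ := volume.restrict Ω)
      (F := fun s x => u s x - 1 - Real.log (u s x)) (F' := fun s x => g s x)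
      (bound := fun _ => M) (x₀ := t) (s := Metric.ball t (t/2)) (Metric.ball_mem_nhds t (half_pos ht))
      ?_ ?_ ?_ ?_ ?_ ?_
    · exact this.2
    · filter_upwards [isOpen_Ioi.mem_nhds ht] with s hs
      exact hMeas _ (hFc s hs)
    · exact hIntC _ (hFc t ht)
    · exact hMeas _ (hg_sliceX t ht)
    · refine (ae_restrict_iff' hΩmeas).2 (Eventually.of_forall fun x hx s hs => ?_)
      exact hM s (hball t ht hs) x (hsub hx)
    · exact integrable_const M
    · refine (ae_restrict_iff' hΩmeas).2 (Eventually.of_forall fun x hx s hs => ?_)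
      have hs0 : 0 < s := lt_of_lt_of_le (by positivity) (hball t ht hs).1
      have h1 := hut s hs0 x (hsub hx)
      have h0 : u s x ≠ 0 := hu_ne s hs0 x (hsub hx)
      have h2 := (h1.sub_const 1).sub (h1.log h0)
      have heq : g s x = ut s x - ut s x / u s x := by rw [hg]; ring
      simp only [heq]
      exact h2
  -- Step 2: the spatial integral of g equals -D
  have key2 : ∀ t, 0 < t → ∫ x in Ω, g t x = -D t := by
    intro t ht
    obtain ⟨MK, hMK⟩ := (hCcp.prod hCcp).exists_bound_of_continuousOn hKcont
    obtain ⟨Mu, hMu⟩ := hCcp.exists_bound_of_continuousOn (hu_sliceX t ht)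
    have hKx : ∀ x ∈ closure Ω, ContinuousOn (fun y => K x y) (closure Ω) := fun x hx =>
      hKcont.comp (continuous_const.prodMk continuous_id).continuousOn
        (fun y hy => Set.mk_mem_prod hx hy)
    have hKy : ∀ y ∈ closure Ω, ContinuousOn (fun x => K x y) (closure Ω) := fun y hy =>
      hKcont.comp (continuous_id.prodMk continuous_const).continuousOn
        (fun x hx => Set.mk_mem_prod hx hy)
    have hW : ContinuousOn (fun x => ∫ y in Ω, K x y * u t y) (closure Ω) := by
      apply continuousOn_of_dominated (bound := fun _ => MK * Mu)
      · intro x hx; exact hMeas _ ((hKx x hx).mul (hu_sliceX t ht))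
      · intro x hx
        refine (ae_restrict_iff' hΩmeas).2 (Eventually.of_forall fun y hy => ?_)
        have h1 := hMK (x, y) ⟨hx, hsub hy⟩
        have h2 := hMu y (hsub hy)
        calc ‖K x y * u t y‖ = ‖K x y‖ * ‖u t y‖ := norm_mul _ _
          _ ≤ MK * Mu := mul_le_mul h1 h2 (norm_nonneg _) ((norm_nonneg _).trans h1)
      · exact integrable_const _
      · refine (ae_restrict_iff' hΩmeas).2 (Eventually.of_forall fun y hy => ?_)
        exact (hKy y (hsub hy)).mul continuousOn_const
    set A : EuclideanSpace ℝ (Fin d) → ℝ :=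
      fun x => μ * (1 - ∫ y in Ω, K x y * u t y) * (u t x - 1) with hA
    have hA_cont : ContinuousOn A (closure Ω) :=
      (continuousOn_const.mul (continuousOn_const.sub hW)).mul
        ((hu_sliceX t ht).sub continuousOn_const)
    have hA_int : IntegrableOn A Ω volume := hIntC _ hA_cont
    have hg_int : IntegrableOn (g t) Ω volume := hIntC _ (hg_sliceX t ht)
    have hg_eq : ∀ x ∈ Ω, g t x = A x + laplacian (u t) x * (1 - 1 / u t x) := by
      intro x hx
      have h0 : u t x ≠ 0 := hu_ne t ht x (hsub hx)
      rw [hg, hA]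
      simp only []
      rw [hPDE t ht x hx]
      field_simp
    have hB_int : IntegrableOn (fun x => laplacian (u t) x * (1 - 1 / u t x)) Ω volume := by
      have heq : ∀ x ∈ Ω, g t x - A x = laplacian (u t) x * (1 - 1 / u t x) := by
        intro x hx; rw [hg_eq x hx]; ring
      exact (hg_int.sub hA_int).congr
        ((ae_restrict_iff' hΩmeas).2 (Eventually.of_forall heq))
    have hsplit : ∫ x in Ω, g t x
        = (∫ x in Ω, A x) + ∫ x in Ω, laplacian (u t) x * (1 - 1 / u t x) := by
      rw [← integral_add hA_int hB_int]
      exact setIntegral_congr_fun hΩmeas (fun x hx => hg_eq x hx)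
    have hA_eval : ∀ x ∈ Ω,
        A x = -(μ * ∫ y in Ω, K x y * (1 - u t x) * (1 - u t y)) := by
      intro x hx
      have hK1 : IntegrableOn (fun y => K x y) Ω volume := hIntC _ (hKx x (hsub hx))
      have hK2 : IntegrableOn (fun y => K x y * u t y) Ω volume :=
        hIntC _ ((hKx x (hsub hx)).mul (hu_sliceX t ht))
      have e1 : ∫ y in Ω, K x y * (1 - u t y) = 1 - ∫ y in Ω, K x y * u t y := by
        have e : ∀ y : EuclideanSpace ℝ (Fin d),
            K x y * (1 - u t y) = K x y - K x y * u t y := fun y => by ring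
        simp_rw [e]
        rw [integral_sub hK1 hK2, hKnorm x hx]
      have e2 : ∫ y in Ω, K x y * (1 - u t x) * (1 - u t y)
          = (1 - u t x) * ∫ y in Ω, K x y * (1 - u t y) := by
        rw [← integral_const_mul]
        congr 1; funext y; ring
      rw [e2, e1, hA]; ring
    have hIA : ∫ x in Ω, A x
        = -(μ * ∫ x in Ω, ∫ y in Ω, K x y * (1 - u t x) * (1 - u t y)) := by
      rw [setIntegral_congr_fun hΩmeas hA_eval, integral_neg, integral_const_mul]
    rw [hsplit, hIA, hNeumann t ht, hD t]
    ring
  -- the Lyapunov functional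
  set V : ℝ → ℝ := fun s => ∫ x in Ω, (u s x - 1 - Real.log (u s x)) with hV
  have hVd : ∀ t, 0 < t → HasDerivAt V (-D t) t := by
    intro t ht
    have := key1 t ht
    rwa [key2 t ht] at this
  have hVpos : ∀ t, 0 < t → 0 ≤ V t := by
    intro t ht
    apply setIntegral_nonneg hΩmeas
    intro x hx
    have h1 := hu_pos t ht x (hsub hx)
    have h2 := Real.log_le_sub_one_of_pos h1
    linarith
  -- nonnegativity of D
  have hDpos : ∀ t, 0 < t → 0 ≤ D t := by
    intro t ht
    rw [hD t]
    have h1 : 0 ≤ ∫ x in Ω, ‖gradient (u t) x‖ ^ 2 / (u t x) ^ 2 :=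
      setIntegral_nonneg hΩmeas fun x hx => div_nonneg (by positivity) (sq_nonneg _)
    have h2 : 0 ≤ ∫ x in Ω, ∫ y in Ω, K x y * (1 - u t x) * (1 - u t y) := by
      obtain ⟨Mu, hMu⟩ := hCcp.exists_bound_of_continuousOn (hu_sliceX t ht)
      have hmem : MemLp (fun x => 1 - u t x) 2 (volume.restrict Ω) := by
        apply MemLp.of_bound (hMeas _ (continuousOn_const.sub (hu_sliceX t ht))) (1 + Mu)
        refine (ae_restrict_iff' hΩmeas).2 (Eventually.of_forall fun x hx => ?_)
        have h3 := hMu x (hsub hx)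
        rw [Real.norm_eq_abs] at h3 ⊢
        calc |1 - u t x| ≤ |1| + |u t x| := abs_sub _ _
          _ ≤ 1 + Mu := by rw [abs_one]; linarith
      simpa using hKposdef _ hmem
    nlinarith
  -- continuity of D on (0, ∞)
  have hDcontAt : ∀ t, 0 < t → ContinuousAt D t := by
    intro t ht
    obtain ⟨M, hM⟩ := hbdd (t/2) (2*t) (by positivity)
    have h1 : ContinuousAt (fun s => ∫ x in Ω, g s x) t := by
      apply continuousAt_of_dominated (bound := fun _ => M)
      · filter_upwards [isOpen_Ioi.mem_nhds ht] with s hs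
        exact hMeas _ (hg_sliceX s hs)
      · filter_upwards [Metric.ball_mem_nhds t (half_pos ht)] with s hs
        refine (ae_restrict_iff' hΩmeas).2 (Eventually.of_forall fun x hx => ?_)
        exact hM s (hball t ht hs) x (hsub hx)
      · exact integrable_const M
      · refine (ae_restrict_iff' hΩmeas).2 (Eventually.of_forall fun x hx => ?_)
        have : ContinuousOn (fun s => g s x) (Set.Ioi 0) :=
          hgcont.comp (continuous_id.prodMk continuous_const).continuousOn
            (fun s hs => Set.mk_mem_prod hs (hsub hx))
        exact this.continuousAt (isOpen_Ioi.mem_nhds ht)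
    apply h1.neg.congr
    filter_upwards [isOpen_Ioi.mem_nhds ht] with s hs
    rw [Pi.neg_apply, key2 s hs, neg_neg]
  have hDcontOn : ContinuousOn D (Set.Ioi 0) := fun t ht =>
    (hDcontAt t ht).continuousWithinAt
  -- FTC-based bound, for all upper endpoints b ≥ t₀
  have key3 : ∀ b, t₀ ≤ b →
      ∫⁻ s in Set.Ioc t₀ b, ENNReal.ofReal (D s) ≤ ENNReal.ofReal (V t₀) := by
    intro b hb
    have hsubI : Set.uIcc t₀ b ⊆ Set.Ioi 0 := by
      rw [Set.uIcc_of_le hb]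
      exact fun s hs => lt_of_lt_of_le ht₀ hs.1
    have hInt : IntervalIntegrable D volume t₀ b :=
      (hDcontOn.mono hsubI).intervalIntegrable
    have hftc : ∫ s in t₀..b, -D s = V b - V t₀ :=
      intervalIntegral.integral_eq_sub_of_hasDerivAt
        (fun s hs => hVd s (hsubI hs)) hInt.neg
    have hneg : ∫ s in t₀..b, -D s = -∫ s in t₀..b, D s := intervalIntegral.integral_neg
    have hint2 : ∫ s in t₀..b, D s = V t₀ - V b := by rw [hneg] at hftc; linarith
    have hIoc : IntegrableOn D (Set.Ioc t₀ b) volume := hInt.1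
    rw [← ofReal_integral_eq_lintegral_ofReal hIoc
      ((ae_restrict_iff' measurableSet_Ioc).2
        (Eventually.of_forall fun s hs => hDpos s (ht₀.trans hs.1)))]
    apply ENNReal.ofReal_le_ofReal
    rw [← intervalIntegral.integral_of_le hb, hint2]
    linarith [hVpos b (ht₀.trans_le hb)]
  -- identify ofReal (V t₀) with the lintegral on the right-hand side
  have hVL : ENNReal.ofReal (V t₀)
      = ∫⁻ x in Ω, ENNReal.ofReal (u t₀ x - 1 - Real.log (u t₀ x)) := by
    apply ofReal_integral_eq_lintegral_ofReal
    · exact hIntC _ (((hu_sliceX t₀ ht₀).sub continuousOn_const).sub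
        ((hu_sliceX t₀ ht₀).log (hu_ne t₀ ht₀)))
    · refine (ae_restrict_iff' hΩmeas).2 (Eventually.of_forall fun x hx => ?_)
      simp only [Pi.zero_apply]
      have h1 := hu_pos t₀ ht₀ x (hsub hx)
      have h2 := Real.log_le_sub_one_of_pos h1
      linarith
  constructor
  · exact (key3 t₁ ht₀₁).trans (le_of_eq hVL)
  · intro _
    have hIciIoi : volume.restrict (Set.Ici t₀) = volume.restrict (Set.Ioi t₀) :=
      Measure.restrict_congr_set Ioi_ae_eq_Ici.symm
    set f : ℕ → ℝ → ENNReal := fun n s =>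
      (Set.Ioc t₀ (t₀ + (n + 1 : ℕ))).indicator (fun s => ENNReal.ofReal (D s)) s with hf
    have hDae : AEMeasurable (fun s => ENNReal.ofReal (D s))
        (volume.restrict (Set.Ioi t₀)) :=
      ENNReal.measurable_ofReal.comp_aemeasurable
        ((hDcontOn.mono (Set.Ioi_subset_Ioi ht₀.le)).aemeasurable measurableSet_Ioi)
    have hfmeas : ∀ n, AEMeasurable (f n) (volume.restrict (Set.Ioi t₀)) := fun n =>
      hDae.indicator measurableSet_Ioc
    have hfmono : ∀ᵐ s ∂(volume.restrict (Set.Ioi t₀)), Monotone fun n => f n s := by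
      refine Eventually.of_forall fun s n m hnm => ?_
      refine Set.indicator_le_indicator_of_subset
        (Set.Ioc_subset_Ioc_right (by
          have : (n : ℝ) ≤ m := Nat.cast_le.mpr hnm
          push_cast
          linarith)) ?_ s
      exact fun _ => zero_le
    have hsup : (fun s => ENNReal.ofReal (D s))
        =ᵐ[volume.restrict (Set.Ioi t₀)] fun s => ⨆ n, f n s := by
      refine (ae_restrict_iff' measurableSet_Ioi).2 (Eventually.of_forall fun s hs => ?_)
      obtain ⟨n, hn⟩ := exists_nat_ge (s - t₀)
      have hmem : s ∈ Set.Ioc t₀ (t₀ + (n + 1 : ℕ)) := ⟨hs, by push_cast; linarith⟩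
      apply le_antisymm
      · refine le_iSup_of_le n ?_
        rw [hf]; simp only [Set.indicator_of_mem hmem]; exact le_rfl
      · refine iSup_le fun m => ?_
        rw [hf]
        exact Set.indicator_le_self' (fun _ _ => zero_le) s
    calc ∫⁻ s in Set.Ici t₀, ENNReal.ofReal (D s)
        = ∫⁻ s in Set.Ioi t₀, ENNReal.ofReal (D s) := by rw [hIciIoi]
      _ = ∫⁻ s in Set.Ioi t₀, ⨆ n, f n s := lintegral_congr_ae hsup
      _ = ⨆ n, ∫⁻ s in Set.Ioi t₀, f n s := lintegral_iSup' hfmeas hfmono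
      _ ≤ ENNReal.ofReal (V t₀) := by
          refine iSup_le fun n => ?_
          rw [hf]
          rw [lintegral_indicator measurableSet_Ioc]
          rw [Measure.restrict_restrict measurableSet_Ioc,
            Set.inter_eq_self_of_subset_left Set.Ioc_subset_Ioi_self]
          exact key3 (t₀ + (n + 1 : ℕ)) (le_add_of_nonneg_right (by positivity))
      _ < ⊤ := ENNReal.ofReal_lt_top
end

section
/- Let Ω ⊆ ℝ^d be a nonempty bounded open set. Let (u_k) be a sequence of continuous positive functions on closure(Ω) that is uniformly equicontinuous on closure(Ω). If ∫_Ω (u_k(x) − 1 − log u_k(x)) dx → 0 as k → ∞, then u_k → 1 uniformly on closure(Ω). -/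
open MeasureTheory Filter

/-- `H(w) = w - 1 - log w ≥ 0` for `w > 0`. -/
lemma H_nonneg {w : ℝ} (hw : 0 < w) : 0 ≤ w - 1 - Real.log w := by
  have := Real.log_le_sub_one_of_pos hw
  linarith

/-- `H` is monotone on `[1, ∞)`. -/
lemma H_mono_upper {a b : ℝ} (hb : 1 ≤ b) (hab : b ≤ a) :
    b - 1 - Real.log b ≤ a - 1 - Real.log a := by
  have hb0 : 0 < b := lt_of_lt_of_le one_pos hb
  have ha0 : 0 < a := lt_of_lt_of_le hb0 hab
  have h1 : Real.log (a / b) ≤ a / b - 1 := Real.log_le_sub_one_of_pos (div_pos ha0 hb0)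
  have h2 : Real.log (a / b) = Real.log a - Real.log b := Real.log_div (ne_of_gt ha0) (ne_of_gt hb0)
  have h3 : a / b - 1 = (a - b) / b := by field_simp
  have h4 : (a - b) / b ≤ a - b := div_le_self (by linarith) hb
  linarith [h1, h2.symm.le, h4, h3.le]

/-- `H` is antitone on `(0, 1]`. -/
lemma H_anti_lower {a b : ℝ} (hb : 0 < b) (hab : b ≤ a) (ha : a ≤ 1) :
    a - 1 - Real.log a ≤ b - 1 - Real.log b := by
  have ha0 : 0 < a := lt_of_lt_of_le hb hab
  have h1 : Real.log (b / a) ≤ b / a - 1 := Real.log_le_sub_one_of_pos (div_pos hb ha0)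
  have h2 : Real.log (b / a) = Real.log b - Real.log a := Real.log_div (ne_of_gt hb) (ne_of_gt ha0)
  -- so  log a - log b ≥ 1 - b/a = (a-b)/a ≥ a - b  (since a ≤ 1)
  have h3 : a - b ≤ (a - b) / a := by
    rw [le_div_iff₀ ha0]
    nlinarith
  have h4 : (a - b) / a = 1 - b / a := by field_simp
  linarith

/-- If a uniformly equicontinuous sequence of positive continuous functions on `closure Ω`
has Lyapunov functional `∫_Ω (u_k - 1 - log u_k)` tending to `0`, then `u_k → 1` uniformly
on `closure Ω`. -/
theorem lyapunov_to_zero_implies_uniform_convergence_to_one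
    {d : ℕ} (Ω : Set (EuclideanSpace ℝ (Fin d)))
    (hΩopen : IsOpen Ω) (hΩbdd : Bornology.IsBounded Ω) (hΩne : Ω.Nonempty)
    (uk : ℕ → EuclideanSpace ℝ (Fin d) → ℝ)
    (huk_cont : ∀ k, ContinuousOn (uk k) (closure Ω))
    (huk_pos : ∀ k, ∀ x ∈ closure Ω, 0 < uk k x)
    (hequi : ∀ ε > (0 : ℝ), ∃ δ > (0 : ℝ), ∀ k, ∀ x ∈ closure Ω, ∀ y ∈ closure Ω,
      dist x y < δ → |uk k x - uk k y| < ε)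
    (hV : Tendsto (fun k => ∫ x in Ω, (uk k x - 1 - Real.log (uk k x))) atTop (nhds 0)) :
    TendstoUniformlyOn uk (fun _ => (1 : ℝ)) atTop (closure Ω) := by
  classical
  have hKcompact : IsCompact (closure Ω) := hΩbdd.isCompact_closure
  have hΩsub : Ω ⊆ closure Ω := subset_closure
  have hΩfin : volume Ω ≠ ⊤ :=
    ne_of_lt (lt_of_le_of_lt (measure_mono hΩsub) hKcompact.measure_lt_top)
  -- integrand and integrability
  set H : ℕ → EuclideanSpace ℝ (Fin d) → ℝ :=
    fun k x => uk k x - 1 - Real.log (uk k x) with hHdef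
  have hHcont : ∀ k, ContinuousOn (H k) (closure Ω) := by
    intro k
    exact ((huk_cont k).sub continuousOn_const).sub
      ((huk_cont k).log (fun x hx => ne_of_gt (huk_pos k x hx)))
  have hHint : ∀ k, IntegrableOn (H k) Ω volume := fun k =>
    (((hHcont k).integrableOn_compact hKcompact)).mono_set hΩsub
  have hHnonneg : ∀ k, ∀ x ∈ closure Ω, 0 ≤ H k x := fun k x hx =>
    H_nonneg (huk_pos k x hx)
  rw [Metric.tendstoUniformlyOn_iff]
  intro ε hε
  -- reduced epsilon
  set ε' : ℝ := min ε 1 / 2 with hε'def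
  have hε'pos : 0 < ε' := by positivity
  have hε'lt1 : ε' < 1 := by
    have : min ε 1 ≤ 1 := min_le_right _ _
    simp only [hε'def]; linarith
  have hε'le : 2 * ε' ≤ ε := by
    have : min ε 1 ≤ ε := min_le_left _ _
    simp only [hε'def]; linarith
  -- the constant c
  set c : ℝ := min ((1 + ε') - 1 - Real.log (1 + ε')) ((1 - ε') - 1 - Real.log (1 - ε'))
    with hcdef
  have hcpos : 0 < c := by
    have h1 : Real.log (1 + ε') < (1 + ε') - 1 :=
      Real.log_lt_sub_one_of_pos (by linarith) (by linarith)
    have h2 : Real.log (1 - ε') < (1 - ε') - 1 :=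
      Real.log_lt_sub_one_of_pos (by linarith) (by linarith)
    exact lt_min (by linarith) (by linarith)
  -- equicontinuity radius
  obtain ⟨δ, hδpos, hδ⟩ := hequi ε' hε'pos
  -- finite subcover of closure Ω by balls of radius δ/2 centered in closure Ω
  have hcover : closure Ω ⊆ ⋃ x ∈ closure Ω, Metric.ball x (δ / 2) := by
    intro x hx
    exact Set.mem_biUnion hx (Metric.mem_ball_self (by linarith))
  obtain ⟨b', hb'sub, hb'fin, hb'cover⟩ :=
    hKcompact.elim_finite_subcover_image (fun i _ => Metric.isOpen_ball) hcover
  -- b' is nonempty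
  have hKne : (closure Ω).Nonempty := hΩne.mono hΩsub
  obtain ⟨x₀, hx₀⟩ := hKne
  have hb'ne : b'.Nonempty := by
    rcases Set.mem_iUnion₂.mp (hb'cover hx₀) with ⟨i, hi, _⟩
    exact ⟨i, hi⟩
  set t : Finset (EuclideanSpace ℝ (Fin d)) := hb'fin.toFinset with htdef
  have htne : t.Nonempty := by
    obtain ⟨i, hi⟩ := hb'ne
    exact ⟨i, hb'fin.mem_toFinset.mpr hi⟩
  -- minimal measure of Ω ∩ ball i (δ/2) over i ∈ t
  set m : ENNReal := t.inf' htne (fun i => volume (Ω ∩ Metric.ball i (δ / 2))) with hmdef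
  have hmle : ∀ i ∈ t, m ≤ volume (Ω ∩ Metric.ball i (δ / 2)) := fun i hi =>
    Finset.inf'_le _ hi
  have hmpos : 0 < m := by
    obtain ⟨i, hi, hie⟩ := Finset.exists_mem_eq_inf' htne
      (fun i => volume (Ω ∩ Metric.ball i (δ / 2)))
    rw [hmdef, hie]
    have hicl : i ∈ closure Ω := hb'sub (hb'fin.mem_toFinset.mp hi)
    obtain ⟨y, hyΩ, hyd⟩ := Metric.mem_closure_iff.mp hicl (δ / 2) (by linarith)
    refine (hΩopen.inter Metric.isOpen_ball).measure_pos volume ⟨y, hyΩ, ?_⟩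
    rw [Metric.mem_ball, dist_comm]; exact hyd
  have hmfin : m ≠ ⊤ := by
    obtain ⟨i, hi, hie⟩ := Finset.exists_mem_eq_inf' htne
      (fun i => volume (Ω ∩ Metric.ball i (δ / 2)))
    rw [hmdef, hie]
    exact ne_of_lt (lt_of_le_of_lt (measure_mono (Set.inter_subset_left)) hΩfin.lt_top)
  set mt : ℝ := m.toReal with hmtdef
  have hmtpos : 0 < mt := ENNReal.toReal_pos (ne_of_gt hmpos) hmfin
  -- eventually the integral is small
  have hev : ∀ᶠ k in atTop, (∫ x in Ω, H k x) < c * mt := by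
    have := hV (Metric.ball_mem_nhds (0 : ℝ) (by positivity : (0:ℝ) < c * mt))
    filter_upwards [this] with k hk
    simp only [Set.mem_preimage, Metric.mem_ball, Real.dist_eq, sub_zero] at hk
    calc (∫ x in Ω, H k x) ≤ |∫ x in Ω, H k x| := le_abs_self _
    _ < c * mt := hk
  filter_upwards [hev] with k hk x hx
  -- suppose for contradiction |u_k x - 1| ≥ ε
  by_contra hcon
  push_neg at hcon
  rw [Real.dist_eq] at hcon
  -- on Ω ∩ ball x δ, H k ≥ c
  have hlb : ∀ y ∈ Ω ∩ Metric.ball x δ, c ≤ H k y := by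
    intro y ⟨hyΩ, hyb⟩
    have hycl : y ∈ closure Ω := hΩsub hyΩ
    have hyd : |uk k x - uk k y| < ε' := hδ k x hx y hycl (by rwa [dist_comm, ← Metric.mem_ball])
    have hypos : 0 < uk k y := huk_pos k y hycl
    have h1 : |1 - uk k x| ≥ 2 * ε' := le_trans hε'le hcon
    -- either uk k y ≥ 1 + ε' or uk k y ≤ 1 - ε'
    rcases abs_cases (1 - uk k x) with ⟨he, _⟩ | ⟨he, _⟩
    · -- uk k x ≤ 1 - 2ε', so uk k y ≤ 1 - ε'
      have hy1 : uk k y ≤ 1 - ε' := by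
        rcases abs_lt.mp hyd with ⟨h, _⟩; linarith
      have := H_anti_lower hypos hy1 (by linarith)
      simp only [hHdef]
      exact le_trans (min_le_right _ _) this
    · -- uk k x ≥ 1 + 2ε', so uk k y ≥ 1 + ε'
      have hy1 : 1 + ε' ≤ uk k y := by
        rcases abs_lt.mp hyd with ⟨_, h⟩; linarith
      have := H_mono_upper (by linarith : (1:ℝ) ≤ 1 + ε') hy1
      simp only [hHdef]
      exact le_trans (min_le_left _ _) this
  -- find i ∈ t with x ∈ ball i (δ/2)
  obtain ⟨i, hi, hxball⟩ := Set.mem_iUnion₂.mp (hb'cover hx)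
  have hit : i ∈ t := hb'fin.mem_toFinset.mpr hi
  have hball_sub : Metric.ball i (δ / 2) ⊆ Metric.ball x δ := by
    intro z hz
    rw [Metric.mem_ball] at *
    calc dist z x ≤ dist z i + dist i x := dist_triangle _ _ _
    _ < δ / 2 + δ / 2 := by
        have := Metric.mem_ball.mp hxball
        rw [dist_comm] at this
        exact add_lt_add hz this
    _ = δ := by ring
  -- measure bounds
  set S : Set (EuclideanSpace ℝ (Fin d)) := Ω ∩ Metric.ball x δ with hSdef
  have hSmeas : MeasurableSet S := (hΩopen.inter Metric.isOpen_ball).measurableSet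
  have hSfin : volume S ≠ ⊤ :=
    ne_of_lt (lt_of_le_of_lt (measure_mono Set.inter_subset_left) hΩfin.lt_top)
  have hmS : m ≤ volume S := le_trans (hmle i hit)
    (measure_mono (Set.inter_subset_inter_right _ hball_sub))
  have hmtS : mt ≤ (volume S).toReal := ENNReal.toReal_le_toReal hmfin hSfin |>.mpr hmS
  -- integral lower bound
  have hSint : IntegrableOn (H k) S volume := (hHint k).mono_set Set.inter_subset_left
  have h1 : c * (volume S).toReal ≤ ∫ y in S, H k y :=
    setIntegral_ge_of_const_le_real hSmeas hSfin hlb hSint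
  have h2 : (∫ y in S, H k y) ≤ ∫ y in Ω, H k y := by
    refine setIntegral_mono_set (hHint k) ?_ (Filter.Eventually.of_forall Set.inter_subset_left)
    filter_upwards [ae_restrict_mem hΩopen.measurableSet] with y hy
    exact hHnonneg k y (hΩsub hy)
  have h3 : c * mt ≤ c * (volume S).toReal :=
    mul_le_mul_of_nonneg_left hmtS (le_of_lt hcpos)
  linarith
end
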